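/- Let T be a d-separation tree for a DAG G, and let u, v be vertices not contained together in any node of T. Then u and v are non-adjacent in G and are d-separated in G by any separator K on the path in T between a node containing u and a node containing v such that K contains neither u nor v; moreover such a separator exists. -/

import Mathlib

/-- A directed graph (given by its edge relation) is acyclic. -/
def Acyclic {V : Type*} (E : V → V → Prop) : Prop :=
  ∀ v, ¬ Relation.TransGen E v v

/-- `b` is a collider between consecutive path vertices `a, b, c`:
both edges point into `b`. -/
def Collider {V : Type*} (E : V → V → Prop) (a b c : V) : Prop :=
  E a b ∧ E c b

/-- Descendants of `u` (including `u` itself): reachable by a directed path. -/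
def Desc {V : Type*} (E : V → V → Prop) (u : V) : Set V :=
  {w | Relation.ReflTransGen E u w}

/-- Ancestors of some vertex of `W`, excluding `W` itself: `an(W)`. -/
def anc {V : Type*} (E : V → V → Prop) (W : Set V) : Set V :=
  {x | x ∉ W ∧ ∃ w ∈ W, Relation.TransGen E x w}

/-- `An(W) = W ∪ an(W)`. -/
def Anc {V : Type*} (E : V → V → Prop) (W : Set V) : Set V :=
  W ∪ anc E W

/-- `l` is an (undirected) path from `u` to `v` in the directed graph `E`:
a duplicate-free list of vertices starting at `u`, ending at `v`,
with consecutive vertices joined by an edge (in either direction). -/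
def IsPath {V : Type*} (E : V → V → Prop) (u v : V) (l : List V) : Prop :=
  l.Chain' (fun a b => E a b ∨ E b a) ∧ l.head? = some u ∧ l.getLast? = some v ∧ l.Nodup

/-- The set of intermediate (interior) vertices of a path `l`:
vertices having a predecessor and successor on `l`. -/
def Interior {V : Type*} (l : List V) : Set V :=
  {b | ∃ a c, [a, b, c] <:+: l}

/-- The path `l` is blocked (d-separated) by `S`: it contains a non-collider
vertex in `S`, or a collider vertex `b` such that neither `b` nor any
descendant of `b` is in `S`. -/
def Blocked {V : Type*} (E : V → V → Prop) (l : List V) (S : Set V) : Prop :=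
  ∃ a b c, [a, b, c] <:+: l ∧
    ((¬ Collider E a b c ∧ b ∈ S) ∨ (Collider E a b c ∧ ∀ w ∈ Desc E b, w ∉ S))

/-- `u` and `v` are d-separated by `S`: every path between them is blocked. -/
def DSep {V : Type*} (E : V → V → Prop) (u v : V) (S : Set V) : Prop :=
  ∀ l, IsPath E u v l → Blocked E l S

/-- Sets `A` and `B` are d-separated by `S`. -/
def DSepSet {V : Type*} (E : V → V → Prop) (A B S : Set V) : Prop :=
  ∀ u ∈ A, ∀ v ∈ B, DSep E u v S

/-- The union of the tree nodes in the subtree on the `i`-side after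
removing the tree edge `{i, j}`. -/
def SubtreeVerts {V ι : Type*} (T : SimpleGraph ι) (C : ι → Set V) (i j : ι) : Set V :=
  ⋃ k ∈ {k | (T.deleteEdges {s(i, j)}).Reachable i k}, C k

/-- `T` (with node sets `C`) is a d-separation tree for the DAG `E`:
`T` is a tree, the node sets cover `V`, and for each tree edge the separator
`C i ∩ C j` d-separates the remaining vertices of the two subtrees. -/
def IsDSepTree {V ι : Type*} (E : V → V → Prop) (T : SimpleGraph ι) (C : ι → Set V) : Prop :=
  T.IsTree ∧ (⋃ i, C i) = Set.univ ∧
    ∀ i j, T.Adj i j →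
      DSepSet E (SubtreeVerts T C i j \ (C i ∩ C j))
        (SubtreeVerts T C j i \ (C i ∩ C j)) (C i ∩ C j)


open SimpleGraph in
lemma dart_reach {ι : Type*} {T : SimpleGraph ι} {i j : ι} (p : T.Walk i j)
    (hp : p.IsPath) {d : T.Dart} (hd : d ∈ p.darts) :
    (T.deleteEdges {s(d.fst, d.snd)}).Reachable i d.fst ∧
    (T.deleteEdges {s(d.fst, d.snd)}).Reachable d.snd j := by
  induction p with
  | nil => simp [Walk.darts] at hd
  | @cons a b c h q ih =>
    rw [Walk.cons_isPath_iff] at hp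
    rw [Walk.darts_cons, List.mem_cons] at hd
    have hedge : d.edge = s(d.fst, d.snd) := rfl
    rcases hd with hd | hd
    · subst hd
      refine ⟨Reachable.refl _, ?_⟩
      have hne : s(a, b) ∉ q.edges := fun he =>
        hp.2 (Walk.fst_mem_support_of_mem_edges q he)
      exact (q.toDeleteEdges {s(a, b)} (by
        intro e he hee
        simp only [Set.mem_singleton_iff] at hee
        exact hne (hee ▸ he))).reachable
    · obtain ⟨r1, r2⟩ := ih hp.1 hd
      refine ⟨?_, r2⟩
      have hne : s(a, b) ≠ s(d.fst, d.snd) := by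
        intro heq
        have : d.edge ∈ q.edges := List.mem_map_of_mem (f := Dart.edge) hd
        rw [hedge, ← heq] at this
        exact hp.2 (Walk.fst_mem_support_of_mem_edges q this)
      have hadj : (T.deleteEdges {s(d.fst, d.snd)}).Adj a b := by
        rw [SimpleGraph.deleteEdges_adj]
        exact ⟨h, by simpa using hne⟩
      exact hadj.reachable.trans r1

open SimpleGraph in
lemma exists_good_dart {V ι : Type*} {C : ι → Set V} {T : SimpleGraph ι}
    {u v : V} (hsep : ∀ i, ¬ (u ∈ C i ∧ v ∈ C i)) :
    ∀ {i j : ι} (p : T.Walk i j), u ∈ C i → v ∈ C j →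
      ∃ d ∈ p.darts, u ∉ C d.fst ∩ C d.snd ∧ v ∉ C d.fst ∩ C d.snd := by
  intro i j p
  induction p with
  | nil => intro hu hv; exact absurd ⟨hu, hv⟩ (hsep _)
  | @cons a b c h q ih =>
    intro hu hv
    by_cases hub : u ∈ C b
    · obtain ⟨d, hd, hd2⟩ := ih hub hv
      exact ⟨d, by rw [Walk.darts_cons]; exact List.mem_cons_of_mem _ hd, hd2⟩
    · refine ⟨⟨(a, b), h⟩, by rw [Walk.darts_cons]; exact List.mem_cons_self, ?_, ?_⟩
      · exact fun hk => hub hk.2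
      · exact fun hk => hsep a ⟨hu, hk.1⟩

/-- if `u` and `v` never occur together in a node of the
d-separation tree, they are non-adjacent in `G`, every separator on the tree
path between a node containing `u` and a node containing `v` that avoids both
`u` and `v` d-separates them, and such a separator exists. -/
theorem stmt_6 {V ι : Type*} (E : V → V → Prop) (hG : Acyclic E)
    (T : SimpleGraph ι) (C : ι → Set V) (hT : IsDSepTree E T C)
    (u v : V) (hsep : ∀ i, ¬ (u ∈ C i ∧ v ∈ C i)) :
    (u ≠ v ∧ ¬ E u v ∧ ¬ E v u) ∧
      ∀ i j, u ∈ C i → v ∈ C j →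
        ∀ p : T.Walk i j, p.IsPath →
          ((∀ d ∈ p.darts, u ∉ C d.fst ∩ C d.snd → v ∉ C d.fst ∩ C d.snd →
              DSep E u v (C d.fst ∩ C d.snd)) ∧
            ∃ d ∈ p.darts, u ∉ C d.fst ∩ C d.snd ∧ v ∉ C d.fst ∩ C d.snd) := by
  classical
  obtain ⟨hTree, hcover, hDsep⟩ := hT
  have hex : ∀ w : V, ∃ i, w ∈ C i := by
    intro w
    have : w ∈ ⋃ i, C i := hcover ▸ Set.mem_univ w
    simpa using this
  have main : ∀ i j, u ∈ C i → v ∈ C j →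
      ∀ p : T.Walk i j, p.IsPath →
        ((∀ d ∈ p.darts, u ∉ C d.fst ∩ C d.snd → v ∉ C d.fst ∩ C d.snd →
            DSep E u v (C d.fst ∩ C d.snd)) ∧
          ∃ d ∈ p.darts, u ∉ C d.fst ∩ C d.snd ∧ v ∉ C d.fst ∩ C d.snd) := by
    intro i j hi hj p hp
    refine ⟨?_, exists_good_dart hsep p hi hj⟩
    intro d hd hu hv
    obtain ⟨r1, r2⟩ := dart_reach p hp hd
    have hu' : u ∈ SubtreeVerts T C d.fst d.snd := by
      refine Set.mem_biUnion (show i ∈ _ from r1.symm) hi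
    have hv' : v ∈ SubtreeVerts T C d.snd d.fst := by
      refine Set.mem_biUnion (show j ∈ _ from ?_) hj
      show (T.deleteEdges {s(d.snd, d.fst)}).Reachable d.snd j
      rwa [Sym2.eq_swap]
    exact hDsep d.fst d.snd d.adj u ⟨hu', hu⟩ v ⟨hv', hv⟩
  have hne : u ≠ v := by
    obtain ⟨i, hi⟩ := hex u
    intro h; exact hsep i ⟨hi, h ▸ hi⟩
  have hnadj : ¬ E u v ∧ ¬ E v u := by
    obtain ⟨i, hi⟩ := hex u
    obtain ⟨j, hj⟩ := hex v
    obtain ⟨w⟩ := hTree.isConnected i j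
    have hp := (w.toPath : T.Path i j).2
    obtain ⟨d, hd, hud, hvd⟩ := (main i j hi hj _ hp).2
    have hds : DSep E u v (C d.fst ∩ C d.snd) := (main i j hi hj _ hp).1 d hd hud hvd
    have key : ∀ (h : E u v ∨ E v u), False := by
      intro h
      have hpath : IsPath E u v [u, v] := by
        refine ⟨?_, rfl, rfl, by simp [hne]⟩
        exact List.isChain_pair.mpr h
      obtain ⟨a, b, c, hinf, _⟩ := hds _ hpath
      have := hinf.length_le
      simp at this
    exact ⟨fun h => key (Or.inl h), fun h => key (Or.inr h)⟩
  exact ⟨⟨hne, hnadj⟩, main⟩
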